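/- With P_n defined as above, u_n is a polynomial in P_1, …, P_n with rational coefficients, homogeneous of weighted degree n when P_j has degree j, and u_n = -(1/(2n)) P_n + (terms involving only P_1, …, P_{n-1}). Consequently ℚ[P_1,…,P_n] = ℚ[u_1,…,u_n] for every n. -/

import Mathlib

open PowerSeries

noncomputable section

/-- Composition `f ∘ g` of formal power series (meaningful when `g` has zero constant term). -/
def psComp (f g : PowerSeries ℂ) : PowerSeries ℂ :=
  PowerSeries.mk fun n => ∑ k ∈ Finset.range (n + 1),
    PowerSeries.coeff k f * PowerSeries.coeff n (g ^ k)

/-- Inclusion of power series into the Laurent series field `ℂ((t))`. -/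
def toLS (f : PowerSeries ℂ) : LaurentSeries ℂ := HahnSeries.ofPowerSeries ℤ ℂ f

/-- The variable `t` of the Laurent series field. -/
def tLS : LaurentSeries ℂ := toLS PowerSeries.X

/-- The formal power series `u(z) = z(1 + Σ_{n≥1} c n · zⁿ)`. -/
def uSeries (c : ℕ → ℂ) : PowerSeries ℂ :=
  PowerSeries.mk fun k => if k = 0 then 0 else if k = 1 then 1 else c (k - 1)

/-- `P_n(u) = Res( (U'(t)/U(t))² t^{-n+1}, t = 0 )`, where `U` is the compositional
inverse of `u`. -/
def Pres (n : ℕ) (U : PowerSeries ℂ) : ℂ :=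
  ((toLS (derivativeFun U) / toLS U) ^ 2 * tLS ^ (1 - (n : ℤ))).coeff (-1)

namespace Prop34

open MvPolynomial Finset

abbrev Rr := MvPolynomial ℕ ℚ

def wt : ℕ → ℕ := fun i => i + 1

/-- coefficients of powers depend only on lower coefficients -/
lemma coeff_pow_congr {A : Type*} [CommRing A] {f g : PowerSeries A} {N : ℕ}
    (h : ∀ m ≤ N, PowerSeries.coeff m f = PowerSeries.coeff m g) (k : ℕ) :
    ∀ j ≤ N, PowerSeries.coeff j (f ^ k) = PowerSeries.coeff j (g ^ k) := by
  induction k with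
  | zero => simp
  | succ k ih =>
    intro j hj
    rw [pow_succ, pow_succ, PowerSeries.coeff_mul, PowerSeries.coeff_mul]
    refine Finset.sum_congr rfl ?_
    rintro ⟨a, b⟩ hab
    rw [Finset.HasAntidiagonal.mem_antidiagonal] at hab
    have ha : a ≤ N := le_trans (hab ▸ Nat.le_add_right a b) hj
    have hb : b ≤ N := le_trans (hab ▸ Nat.le_add_left b a) hj
    rw [ih a ha, h b hb]

lemma coeff_pow_hom {f : PowerSeries Rr} {s : ℕ}
    (hf : ∀ m, (PowerSeries.coeff m f).IsWeightedHomogeneous wt (m + s)) (k N : ℕ) :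
    (PowerSeries.coeff N (f ^ k)).IsWeightedHomogeneous wt (N + k * s) := by
  induction k generalizing N with
  | zero =>
    rw [pow_zero, PowerSeries.coeff_one]
    by_cases hN : N = 0
    · subst hN; simpa using isWeightedHomogeneous_one ℚ wt
    · simp only [hN, if_false, Nat.mul_zero]
      exact isWeightedHomogeneous_zero ℚ wt _
  | succ k ih =>
    rw [pow_succ, PowerSeries.coeff_mul]
    apply IsWeightedHomogeneous.sum
    rintro ⟨a, b⟩ hab
    rw [Finset.HasAntidiagonal.mem_antidiagonal] at hab
    have : (a + k * s) + (b + s) = N + (k+1) * s := by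
      rw [add_mul, one_mul]; omega
    exact this ▸ (ih a).mul (hf b)

lemma coeff_pow_vars {f : PowerSeries Rr} {s : Finset ℕ}
    (hf : ∀ m, (PowerSeries.coeff m f).vars ⊆ s) (k N : ℕ) :
    (PowerSeries.coeff N (f ^ k)).vars ⊆ s := by
  induction k generalizing N with
  | zero =>
    rw [pow_zero, PowerSeries.coeff_one]
    by_cases hN : N = 0 <;> simp [hN]
  | succ k ih =>
    rw [pow_succ, PowerSeries.coeff_mul]
    refine (vars_sum_subset _ _).trans ?_
    intro i hi
    simp only [Finset.mem_biUnion] at hi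
    obtain ⟨⟨a,b⟩, _, hi⟩ := hi
    rcases Finset.mem_union.1 (vars_mul _ _ hi) with h | h
    · exact ih a h
    · exact hf b h

def bP : ℕ → MvPolynomial ℕ ℚ
  | 0 => 1
  | (m+1) => -∑ j ∈ Finset.range (m+1), MvPolynomial.X j *
      PowerSeries.coeff (m - j)
        ((PowerSeries.mk fun l => if h : l < m + 1 then bP l else 0) ^ (j + 2))
  decreasing_by exact h

def Vlt (m : ℕ) : PowerSeries Rr := PowerSeries.mk fun l => if l < m then bP l else 0

lemma bP_succ (m : ℕ) : bP (m+1) = -∑ j ∈ Finset.range (m+1), MvPolynomial.X j *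
    PowerSeries.coeff (m - j) ((Vlt (m+1)) ^ (j + 2)) := by
  rw [bP]
  simp only [Vlt, dite_eq_ite]


lemma IsWH_neg {p : Rr} {d : ℕ} (h : p.IsWeightedHomogeneous wt d) :
    (-p).IsWeightedHomogeneous wt d := by
  rw [← mem_weightedHomogeneousSubmodule ℚ] at h ⊢
  exact neg_mem h

lemma IsWH_smul (q : ℚ) {p : Rr} {d : ℕ} (h : p.IsWeightedHomogeneous wt d) :
    (q • p).IsWeightedHomogeneous wt d := by
  rw [← mem_weightedHomogeneousSubmodule ℚ] at h ⊢
  exact Submodule.smul_mem _ q h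

lemma IsWH_natCast_mul (a : ℕ) {p : Rr} {d : ℕ} (h : p.IsWeightedHomogeneous wt d) :
    ((a : Rr) * p).IsWeightedHomogeneous wt d := by
  have ha : ((a : Rr)) = MvPolynomial.C ((a : ℚ)) := by simp
  rw [ha]
  simpa using (isWeightedHomogeneous_C wt ((a : ℚ))).mul h

lemma vars_natCast_mul (a : ℕ) (p : Rr) : ((a : Rr) * p).vars ⊆ p.vars := by
  have ha : ((a : Rr)) = MvPolynomial.C ((a : ℚ)) := by simp
  rw [ha]
  refine (vars_mul _ _).trans ?_
  rw [vars_C]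
  simp

lemma vars_smul_subset (q : ℚ) (p : Rr) : (q • p).vars ⊆ p.vars := by
  rw [MvPolynomial.smul_eq_C_mul]
  refine (vars_mul _ _).trans ?_
  rw [vars_C]
  simp

def Vu : PowerSeries Rr := PowerSeries.mk bP

lemma coeff_Vu (m : ℕ) : PowerSeries.coeff m Vu = bP m := PowerSeries.coeff_mk _ _

lemma hVlt_pow (m k j : ℕ) (hj : j ≤ m) :
    PowerSeries.coeff j ((Vlt (m+1)) ^ k) = PowerSeries.coeff j (Vu ^ k) := by
  refine coeff_pow_congr (N := m) ?_ k j hj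
  intro l hl
  simp [Vlt, Vu, PowerSeries.coeff_mk, (by omega : l < m + 1)]
  intro h; exact absurd h (by omega)

lemma bP_succ' (m : ℕ) : bP (m+1) = -∑ j ∈ Finset.range (m+1), MvPolynomial.X j *
    PowerSeries.coeff (m - j) (Vu ^ (j + 2)) := by
  rw [bP_succ]
  congr 1
  refine Finset.sum_congr rfl fun j hj => ?_
  rw [hVlt_pow m (j+2) (m-j) (Nat.sub_le m j)]

lemma bP_hom : ∀ m, (bP m).IsWeightedHomogeneous wt m := by
  intro m
  induction m using Nat.strong_induction_on with
  | _ m ih =>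
    match m with
    | 0 => simpa [bP] using isWeightedHomogeneous_one ℚ wt
    | (m+1) =>
      rw [bP_succ]
      apply IsWH_neg
      apply IsWeightedHomogeneous.sum
      intro j hj
      rw [Finset.mem_range] at hj
      have hcoeff : ∀ N, (PowerSeries.coeff N ((Vlt (m+1))^(j+2))).IsWeightedHomogeneous wt N := by
        intro N
        have := coeff_pow_hom (f := Vlt (m+1)) (s := 0) ?_ (j+2) N
        · simpa using this
        · intro l
          simp only [Vlt, PowerSeries.coeff_mk]
          split
          · next h => simpa using ih l h
          · simpa using isWeightedHomogeneous_zero ℚ wt (l + 0)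
      have hd : wt j + (m - j) = m + 1 := by simp only [wt]; omega
      have := (isWeightedHomogeneous_X ℚ wt j).mul (hcoeff (m-j))
      rwa [hd] at this

lemma bP_vars : ∀ m, (bP m).vars ⊆ Finset.range m := by
  intro m
  induction m using Nat.strong_induction_on with
  | _ m ih =>
    match m with
    | 0 => simp [bP]
    | (m+1) =>
      rw [bP_succ, vars_neg]
      refine (vars_sum_subset _ _).trans ?_
      intro i hi
      simp only [Finset.mem_biUnion] at hi
      obtain ⟨j, hj, hi⟩ := hi
      rw [Finset.mem_range] at hj
      rcases Finset.mem_union.1 (vars_mul _ _ hi) with h | h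
      · rw [vars_X] at h
        simp only [Finset.mem_singleton] at h
        subst h
        exact Finset.mem_range.2 (by omega)
      · have hsub : (PowerSeries.coeff (m-j) ((Vlt (m+1))^(j+2))).vars ⊆ Finset.range (m+1) := by
          refine coeff_pow_vars ?_ (j+2) (m-j)
          intro l
          simp only [Vlt, PowerSeries.coeff_mk]
          split
          · next hl => exact (ih l hl).trans (by
              intro x hx; rw [Finset.mem_range] at hx ⊢; omega)
          · simp
        exact hsub h

lemma constantCoeff_Vu : PowerSeries.constantCoeff Vu = 1 := by
  rw [← PowerSeries.coeff_zero_eq_constantCoeff_apply, coeff_Vu]; simp [bP]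

lemma coeff_Vu_pow_vars (N k : ℕ) :
    (PowerSeries.coeff N (Vu ^ k)).vars ⊆ Finset.range N := by
  rw [← hVlt_pow N k N le_rfl]
  refine coeff_pow_vars ?_ k N
  intro l
  simp only [Vlt, PowerSeries.coeff_mk]
  split
  · next hl => exact (bP_vars l).trans (by
      intro x hx; rw [Finset.mem_range] at hx ⊢; omega)
  · simp

lemma bP_lead (m : ℕ) : (bP (m+1) + MvPolynomial.X m).vars ⊆ Finset.range m := by
  have h0 : PowerSeries.coeff 0 (Vu ^ (m+2)) = 1 := by
    rw [PowerSeries.coeff_zero_eq_constantCoeff_apply, map_pow, constantCoeff_Vu, one_pow]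
  have heq : bP (m+1) + MvPolynomial.X m
      = -∑ j ∈ Finset.range m, MvPolynomial.X j *
          PowerSeries.coeff (m - j) (Vu ^ (j + 2)) := by
    rw [bP_succ', Finset.sum_range_succ, Nat.sub_self, h0, mul_one]
    ring
  rw [heq, vars_neg]
  refine (vars_sum_subset _ _).trans ?_
  intro i hi
  simp only [Finset.mem_biUnion] at hi
  obtain ⟨j, hj, hi⟩ := hi
  rw [Finset.mem_range] at hj
  rcases Finset.mem_union.1 (vars_mul _ _ hi) with h | h
  · rw [vars_X] at h
    simp only [Finset.mem_singleton] at h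
    subst h
    exact Finset.mem_range.2 hj
  · have hsub := coeff_Vu_pow_vars (m-j) (j+2)
    exact (hsub.trans (by intro x hx; rw [Finset.mem_range] at hx ⊢; omega)) h

def Iu : PowerSeries Rr := PowerSeries.invOfUnit Vu 1

lemma Iu_mul_Vu : Iu * Vu = 1 :=
  PowerSeries.invOfUnit_mul Vu 1 (by simp [constantCoeff_Vu])

lemma coeff_zero_Iu : PowerSeries.coeff 0 Iu = 1 := by
  rw [PowerSeries.coeff_zero_eq_constantCoeff_apply]
  simp [Iu]

lemma coeff_derivativeFun' {R : Type*} [CommSemiring R] (f : PowerSeries R) (n : ℕ) :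
    PowerSeries.coeff n (PowerSeries.derivativeFun f) = PowerSeries.coeff (n + 1) f * (n + 1) :=
  PowerSeries.coeff_derivative f n

def Du : PowerSeries Rr := PowerSeries.derivativeFun Vu

def Wu : PowerSeries Rr := Du * Iu

lemma Wu_mul_Vu : Wu * Vu = Du := by rw [Wu, mul_assoc, Iu_mul_Vu, mul_one]

def wP (k : ℕ) : Rr := PowerSeries.coeff k Wu

lemma coeff_Du (k : ℕ) : PowerSeries.coeff k Du = bP (k+1) * ((k+1 : ℕ) : Rr) := by
  rw [Du, coeff_derivativeFun', coeff_Vu]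
  push_cast
  ring

lemma coeff_Du_hom (k : ℕ) : (PowerSeries.coeff k Du).IsWeightedHomogeneous wt (k+1) := by
  rw [coeff_Du, mul_comm]
  exact IsWH_natCast_mul (k+1) (bP_hom (k+1))

lemma coeff_Du_vars (k : ℕ) : (PowerSeries.coeff k Du).vars ⊆ Finset.range (k+1) := by
  rw [coeff_Du, mul_comm]
  exact (vars_natCast_mul (k+1) _).trans (bP_vars (k+1))

lemma coeff_Iu_hom : ∀ b, (PowerSeries.coeff b Iu).IsWeightedHomogeneous wt b := by
  intro b
  induction b using Nat.strong_induction_on with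
  | _ b ih =>
    rw [Iu, PowerSeries.coeff_invOfUnit]
    by_cases hb : b = 0
    · subst hb; simpa using isWeightedHomogeneous_one ℚ wt
    · rw [if_neg hb]
      have h1 : (-↑((1 : Rrˣ)⁻¹) : Rr) = -1 := by simp
      rw [h1, neg_one_mul]
      apply IsWH_neg
      apply IsWeightedHomogeneous.sum
      rintro ⟨x1, x2⟩ hx
      rw [Finset.HasAntidiagonal.mem_antidiagonal] at hx
      by_cases hlt : x2 < b
      · rw [if_pos hlt]
        have := ((coeff_Vu x1) ▸ (bP_hom x1)).mul (ih x2 hlt)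
        rwa [hx] at this
      · rw [if_neg hlt]
        exact isWeightedHomogeneous_zero ℚ wt _

lemma coeff_Iu_vars : ∀ b, (PowerSeries.coeff b Iu).vars ⊆ Finset.range b := by
  intro b
  induction b using Nat.strong_induction_on with
  | _ b ih =>
    rw [Iu, PowerSeries.coeff_invOfUnit]
    by_cases hb : b = 0
    · subst hb; simp
    · rw [if_neg hb]
      have h1 : (-↑((1 : Rrˣ)⁻¹) : Rr) = -1 := by simp
      rw [h1, neg_one_mul, vars_neg]
      refine (vars_sum_subset _ _).trans ?_
      intro i hi
      simp only [Finset.mem_biUnion] at hi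
      obtain ⟨⟨x1, x2⟩, hx, hi⟩ := hi
      rw [Finset.HasAntidiagonal.mem_antidiagonal] at hx
      by_cases hlt : x2 < b
      · rw [if_pos hlt] at hi
        rcases Finset.mem_union.1 (vars_mul _ _ hi) with h | h
        · rw [coeff_Vu] at h
          exact Finset.mem_range.2 (by
            have := Finset.mem_range.1 (bP_vars x1 h); omega)
        · exact Finset.mem_range.2 (by
            have := Finset.mem_range.1 (ih x2 hlt h); omega)
      · rw [if_neg hlt] at hi
        simp at hi

lemma wP_hom (k : ℕ) : (wP k).IsWeightedHomogeneous wt (k+1) := by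
  rw [wP, Wu, PowerSeries.coeff_mul]
  apply IsWeightedHomogeneous.sum
  rintro ⟨a, b⟩ hab
  rw [Finset.HasAntidiagonal.mem_antidiagonal] at hab
  have := (coeff_Du_hom a).mul (coeff_Iu_hom b)
  have hd : a + 1 + b = k + 1 := by omega
  rwa [hd] at this

lemma wP_vars (k : ℕ) : (wP k).vars ⊆ Finset.range (k+1) := by
  rw [wP, Wu, PowerSeries.coeff_mul]
  refine (vars_sum_subset _ _).trans ?_
  intro i hi
  simp only [Finset.mem_biUnion] at hi
  obtain ⟨⟨a, b⟩, hab, hi⟩ := hi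
  rw [Finset.HasAntidiagonal.mem_antidiagonal] at hab
  rcases Finset.mem_union.1 (vars_mul _ _ hi) with h | h
  · exact Finset.mem_range.2 (by
      have := Finset.mem_range.1 (coeff_Du_vars a h); omega)
  · exact Finset.mem_range.2 (by
      have := Finset.mem_range.1 (coeff_Iu_vars b h); omega)

lemma wP_lead (m : ℕ) :
    (wP m + ((m+1 : ℕ) : Rr) * MvPolynomial.X m).vars ⊆ Finset.range m := by
  have hmem : ((m, 0) : ℕ × ℕ) ∈ Finset.HasAntidiagonal.antidiagonal m := by
    simp
  have hw : wP m = (∑ p ∈ (Finset.HasAntidiagonal.antidiagonal m).erase (m, 0),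
        PowerSeries.coeff p.1 Du * PowerSeries.coeff p.2 Iu)
      + bP (m+1) * ((m+1 : ℕ) : Rr) := by
    rw [wP, Wu, PowerSeries.coeff_mul, ← Finset.sum_erase_add _ _ hmem]
    norm_num [coeff_Du, coeff_zero_Iu]
  have heq : wP m + ((m+1 : ℕ) : Rr) * MvPolynomial.X m
      = (∑ p ∈ (Finset.HasAntidiagonal.antidiagonal m).erase (m, 0),
          PowerSeries.coeff p.1 Du * PowerSeries.coeff p.2 Iu)
        + ((m+1 : ℕ) : Rr) * (bP (m+1) + MvPolynomial.X m) := by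
    rw [hw]; ring
  rw [heq]
  refine (vars_add_subset _ _).trans ?_
  apply Finset.union_subset
  · refine (vars_sum_subset _ _).trans ?_
    intro i hi
    simp only [Finset.mem_biUnion] at hi
    obtain ⟨⟨a, b⟩, hab, hi⟩ := hi
    have hab' := Finset.HasAntidiagonal.mem_antidiagonal.1 (Finset.mem_of_mem_erase hab)
    have hne := Finset.ne_of_mem_erase hab
    have ha : a < m := by
      rcases Nat.lt_or_ge a m with h | h
      · exact h
      · exfalso; apply hne
        have : a = m := by omega
        subst this
        have : b = 0 := by omega
        simp [this]
    rcases Finset.mem_union.1 (vars_mul _ _ hi) with h | h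
    · exact Finset.mem_range.2 (by
        have := Finset.mem_range.1 (coeff_Du_vars a h); omega)
    · exact Finset.mem_range.2 (by
        have := Finset.mem_range.1 (coeff_Iu_vars b h); omega)
  · exact (vars_natCast_mul _ _).trans (bP_lead m)

def PuP (n : ℕ) : Rr :=
  2 * wP (n-1) + if 2 ≤ n then ∑ p ∈ Finset.HasAntidiagonal.antidiagonal (n-2), wP p.1 * wP p.2 else 0

def EuP (n : ℕ) : Rr := PuP n + ((2 * n : ℕ) : Rr) * MvPolynomial.X (n-1)

lemma PuP_eq (n : ℕ) : PuP n = -(((2*n : ℕ) : Rr) * MvPolynomial.X (n-1)) + EuP n := by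
  rw [EuP]; ring

lemma PuP_hom {n : ℕ} (hn : 1 ≤ n) : (PuP n).IsWeightedHomogeneous wt n := by
  rw [PuP]
  apply IsWeightedHomogeneous.add
  · have h2 : (2 : Rr) = ((2 : ℕ) : Rr) := by norm_num
    rw [h2]
    have := IsWH_natCast_mul 2 (wP_hom (n-1))
    have hd : n - 1 + 1 = n := by omega
    rwa [hd] at this
  · by_cases h2 : 2 ≤ n
    · rw [if_pos h2]
      apply IsWeightedHomogeneous.sum
      rintro ⟨a, b⟩ hab
      rw [Finset.HasAntidiagonal.mem_antidiagonal] at hab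
      have := (wP_hom a).mul (wP_hom b)
      have hd : a + 1 + (b + 1) = n := by omega
      rwa [hd] at this
    · rw [if_neg h2]
      exact isWeightedHomogeneous_zero ℚ wt _

lemma EuP_hom {n : ℕ} (hn : 1 ≤ n) : (EuP n).IsWeightedHomogeneous wt n := by
  rw [EuP]
  apply (PuP_hom hn).add
  have := IsWH_natCast_mul (2*n) (isWeightedHomogeneous_X ℚ wt (n-1))
  have hd : wt (n-1) = n := by simp only [wt]; omega
  rwa [hd] at this

lemma PuP_vars {n : ℕ} (hn : 1 ≤ n) : (PuP n).vars ⊆ Finset.range n := by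
  rw [PuP]
  refine (vars_add_subset _ _).trans (Finset.union_subset ?_ ?_)
  · have h2 : (2 : Rr) = ((2 : ℕ) : Rr) := by norm_num
    rw [h2]
    refine (vars_natCast_mul _ _).trans ((wP_vars (n-1)).trans ?_)
    intro x hx; rw [Finset.mem_range] at hx ⊢; omega
  · by_cases h2 : 2 ≤ n
    · rw [if_pos h2]
      refine (vars_sum_subset _ _).trans ?_
      intro i hi
      simp only [Finset.mem_biUnion] at hi
      obtain ⟨⟨a, b⟩, hab, hi⟩ := hi
      rw [Finset.HasAntidiagonal.mem_antidiagonal] at hab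
      rcases Finset.mem_union.1 (vars_mul _ _ hi) with h | h
      · exact Finset.mem_range.2 (by
          have := Finset.mem_range.1 (wP_vars a h); omega)
      · exact Finset.mem_range.2 (by
          have := Finset.mem_range.1 (wP_vars b h); omega)
    · rw [if_neg h2]; simp

lemma EuP_vars {n : ℕ} (hn : 1 ≤ n) : (EuP n).vars ⊆ Finset.range (n-1) := by
  obtain ⟨m, rfl⟩ : ∃ m, n = m + 1 := ⟨n - 1, by omega⟩
  have heq : EuP (m+1) = ((2 : ℕ) : Rr) * (wP m + ((m+1 : ℕ) : Rr) * MvPolynomial.X m)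
      + (if 2 ≤ m + 1 then ∑ p ∈ Finset.HasAntidiagonal.antidiagonal (m+1-2), wP p.1 * wP p.2 else 0) := by
    rw [EuP, PuP]
    simp only [Nat.add_sub_cancel]
    push_cast
    ring
  rw [heq]
  simp only [Nat.add_sub_cancel]
  refine (vars_add_subset _ _).trans (Finset.union_subset ?_ ?_)
  · exact (vars_natCast_mul _ _).trans (wP_lead m)
  · by_cases h2 : 2 ≤ m + 1
    · rw [if_pos h2]
      refine (vars_sum_subset _ _).trans ?_
      intro i hi
      simp only [Finset.mem_biUnion] at hi
      obtain ⟨⟨a, b⟩, hab, hi⟩ := hi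
      rw [Finset.HasAntidiagonal.mem_antidiagonal] at hab
      have hm : a + b = m - 1 := by omega
      have hmm : 1 ≤ m := by omega
      rcases Finset.mem_union.1 (vars_mul _ _ hi) with h | h
      · exact Finset.mem_range.2 (by
          have := Finset.mem_range.1 (wP_vars a h); omega)
      · exact Finset.mem_range.2 (by
          have := Finset.mem_range.1 (wP_vars b h); omega)
    · rw [if_neg h2]; simp

section Generic

lemma aeval_IsWH {σ τ : Type} {w : σ → ℕ} {w' : τ → ℕ}
    (f : σ → MvPolynomial τ ℚ) (hf : ∀ i, (f i).IsWeightedHomogeneous w' (w i))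
    {p : MvPolynomial σ ℚ} {d : ℕ} (hp : p.IsWeightedHomogeneous w d) :
    (MvPolynomial.aeval f p).IsWeightedHomogeneous w' d := by
  conv_lhs => rw [p.as_sum]
  rw [map_sum]
  apply IsWeightedHomogeneous.sum
  intro v hv
  rw [aeval_monomial]
  have halg : (algebraMap ℚ (MvPolynomial τ ℚ)) (MvPolynomial.coeff v p)
      = MvPolynomial.C (MvPolynomial.coeff v p) := rfl
  have hprod : (v.prod fun i k => f i ^ k).IsWeightedHomogeneous w' (Finsupp.weight w v) := by
    rw [Finsupp.prod, Finsupp.weight_apply, Finsupp.sum]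
    apply IsWeightedHomogeneous.prod
    intro i _
    have hpow : ∀ k : ℕ, (f i ^ k).IsWeightedHomogeneous w' (k * w i) := by
      intro k
      induction k with
      | zero => simpa using isWeightedHomogeneous_one ℚ w'
      | succ k ih =>
        rw [pow_succ]
        have := ih.mul (hf i)
        have hd : k * w i + w i = (k+1) * w i := by ring
        rwa [hd] at this
    simpa [smul_eq_mul] using hpow (v i)
  have hres := (isWeightedHomogeneous_C w' (MvPolynomial.coeff v p)).mul hprod
  rw [zero_add, hp (MvPolynomial.mem_support_iff.1 hv)] at hres
  rwa [halg]

lemma vars_aeval_subset {σ τ : Type} [DecidableEq σ] [DecidableEq τ]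
    (f : σ → MvPolynomial τ ℚ) (p : MvPolynomial σ ℚ) :
    (MvPolynomial.aeval f p).vars ⊆ p.vars.biUnion fun i => (f i).vars := by
  conv_lhs => rw [p.as_sum]
  rw [map_sum]
  refine (vars_sum_subset _ _).trans ?_
  intro x hx
  simp only [Finset.mem_biUnion] at hx ⊢
  obtain ⟨v, hv, hx⟩ := hx
  rw [aeval_monomial] at hx
  rcases Finset.mem_union.1 (vars_mul _ _ hx) with h | h
  · rw [show (algebraMap ℚ (MvPolynomial τ ℚ)) (MvPolynomial.coeff v p)
      = MvPolynomial.C (MvPolynomial.coeff v p) from rfl, vars_C] at h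
    exact absurd h (Finset.notMem_empty x)
  · rw [Finsupp.prod] at h
    have hsub := vars_prod (s := v.support) (fun i => f i ^ v i) h
    simp only [Finset.mem_biUnion] at hsub
    obtain ⟨i, hi, hxi⟩ := hsub
    exact ⟨i, (mem_vars i).2 ⟨v, hv, hi⟩, vars_pow _ _ hxi⟩

lemma aeval_congr_on_vars {σ : Type} [DecidableEq σ] {A : Type*} [CommSemiring A] [Algebra ℚ A]
    {p : MvPolynomial σ ℚ} {f g : σ → A} (h : ∀ i ∈ p.vars, f i = g i) :
    MvPolynomial.aeval f p = MvPolynomial.aeval g p := by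
  conv_lhs => rw [p.as_sum]
  conv_rhs => rw [p.as_sum]
  rw [map_sum, map_sum]
  refine Finset.sum_congr rfl fun v hv => ?_
  rw [aeval_monomial, aeval_monomial]
  congr 1
  rw [Finsupp.prod, Finsupp.prod]
  refine Finset.prod_congr rfl fun i hi => ?_
  rw [h i ((mem_vars i).2 ⟨v, hv, hi⟩)]

lemma aeval_mem_subalgebra {σ : Type} [DecidableEq σ] {A : Type*} [CommSemiring A] [Algebra ℚ A]
    (S : Subalgebra ℚ A) {p : MvPolynomial σ ℚ} {f : σ → A}
    (h : ∀ i ∈ p.vars, f i ∈ S) : MvPolynomial.aeval f p ∈ S := by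
  rw [p.as_sum, map_sum]
  apply Subalgebra.sum_mem
  intro v hv
  rw [aeval_monomial]
  apply Subalgebra.mul_mem
  · exact S.algebraMap_mem _
  · rw [Finsupp.prod]
    apply Subalgebra.prod_mem
    intro i hi
    exact Subalgebra.pow_mem S (h i ((mem_vars i).2 ⟨v, hv, hi⟩)) _

end Generic

def QpP : ℕ → MvPolynomial ℕ ℚ
  | 0 => 0
  | (m+1) => (-(1 / (2 * ((m : ℚ) + 1)))) •
      (MvPolynomial.X m - MvPolynomial.aeval
        (fun i => if h : i < m then QpP (i+1) else 0) (EuP (m+1)))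
  decreasing_by exact Nat.succ_lt_succ h

lemma QpP_hom : ∀ m, (QpP m).IsWeightedHomogeneous wt m := by
  intro m
  induction m using Nat.strong_induction_on with
  | _ m ih =>
    match m with
    | 0 => rw [QpP]; exact isWeightedHomogeneous_zero ℚ wt 0
    | (m+1) =>
      rw [QpP]
      apply IsWH_smul
      rw [sub_eq_add_neg]
      apply IsWeightedHomogeneous.add
      · simpa [wt] using isWeightedHomogeneous_X ℚ wt m
      · apply IsWH_neg
        refine aeval_IsWH (w := wt) _ ?_ (EuP_hom (by omega))
        intro i
        split
        · next h => simpa [wt] using ih (i+1) (by omega)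
        · exact isWeightedHomogeneous_zero ℚ wt _

lemma QpP_vars : ∀ m, (QpP m).vars ⊆ Finset.range m := by
  intro m
  induction m using Nat.strong_induction_on with
  | _ m ih =>
    match m with
    | 0 => rw [QpP]; simp
    | (m+1) =>
      rw [QpP]
      refine (vars_smul_subset _ _).trans ?_
      refine (vars_sub_subset _).trans (Finset.union_subset ?_ ?_)
      · rw [vars_X]
        intro x hx
        simp only [Finset.mem_singleton] at hx
        subst hx
        exact Finset.mem_range.2 (by omega)
      · refine (vars_aeval_subset _ _).trans ?_
        intro x hx
        simp only [Finset.mem_biUnion] at hx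
        obtain ⟨i, hi, hx⟩ := hx
        have him : i < m := Finset.mem_range.1 ((EuP_vars (by omega)) hi)
        rw [dif_pos him] at hx
        have := Finset.mem_range.1 (ih (i+1) (by omega) hx)
        exact Finset.mem_range.2 (by omega)

lemma QpP_rem_vars (m : ℕ) :
    (QpP (m+1) + (1 / (2 * ((m : ℚ) + 1))) • MvPolynomial.X m).vars ⊆ Finset.range m := by
  have heq : QpP (m+1) + (1 / (2 * ((m : ℚ) + 1))) • MvPolynomial.X m
      = (1 / (2 * ((m : ℚ) + 1))) • MvPolynomial.aeval
          (fun i => if h : i < m then QpP (i+1) else 0) (EuP (m+1)) := by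
    rw [QpP, neg_smul, smul_sub]
    abel
  rw [heq]
  refine (vars_smul_subset _ _).trans ?_
  refine (vars_aeval_subset _ _).trans ?_
  intro x hx
  simp only [Finset.mem_biUnion] at hx
  obtain ⟨i, hi, hx⟩ := hx
  have him : i < m := Finset.mem_range.1 ((EuP_vars (by omega)) hi)
  rw [dif_pos him] at hx
  have := Finset.mem_range.1 (QpP_vars (i+1) hx)
  exact Finset.mem_range.2 (by omega)

def evc (c : ℕ → ℂ) : Rr →ₐ[ℚ] ℂ := MvPolynomial.aeval (fun i => c (i+1))

def Vof (U : PowerSeries ℂ) : PowerSeries ℂ :=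
  PowerSeries.mk fun k => PowerSeries.coeff (k+1) U

lemma coeff_psComp (f g : PowerSeries ℂ) (n : ℕ) :
    PowerSeries.coeff n (psComp f g) = ∑ k ∈ Finset.range (n + 1),
      PowerSeries.coeff k f * PowerSeries.coeff n (g ^ k) := by
  rw [psComp, PowerSeries.coeff_mk]

lemma coeff_uSeries (c : ℕ → ℂ) (k : ℕ) :
    PowerSeries.coeff k (uSeries c) =
      if k = 0 then 0 else if k = 1 then 1 else c (k - 1) := by
  rw [uSeries, PowerSeries.coeff_mk]

section Instance

variable {c : ℕ → ℂ} {U : PowerSeries ℂ}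

lemma coeff_one_U (hcomp : psComp (uSeries c) U = PowerSeries.X) :
    PowerSeries.coeff 1 U = 1 := by
  have hco := congrArg (PowerSeries.coeff 1) hcomp
  rw [coeff_psComp] at hco
  rw [Finset.sum_range_succ, Finset.sum_range_succ, Finset.sum_range_zero] at hco
  simpa [coeff_uSeries] using hco

lemma X_mul_Vof (hU0 : PowerSeries.constantCoeff U = 0) :
    PowerSeries.X * Vof U = U := by
  ext n
  cases n with
  | zero => simp [hU0]
  | succ n =>
    have := PowerSeries.coeff_X_pow_mul (Vof U) 1 n
    simpa [Vof] using this

lemma map_Vlt (c : ℕ → ℂ) (m : ℕ) :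
    PowerSeries.map (evc c).toRingHom (Vlt m)
      = PowerSeries.mk (fun l => if l < m then evc c (bP l) else 0) := by
  ext l
  rw [PowerSeries.coeff_map]
  simp only [Vlt, PowerSeries.coeff_mk]
  split <;> simp

lemma coeff_U_pow (hU0 : PowerSeries.constantCoeff U = 0) (m j : ℕ) (hj : j ≤ m) :
    PowerSeries.coeff (m+2) (U ^ (j+2)) =
      PowerSeries.coeff (m-j) ((Vof U) ^ (j+2)) := by
  conv_lhs => rw [← X_mul_Vof hU0]
  rw [mul_pow]
  have h : m + 2 = (j + 2) + (m - j) := by omega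
  rw [h, add_comm (j+2) (m-j), PowerSeries.coeff_X_pow_mul]

lemma evc_bP (hU0 : PowerSeries.constantCoeff U = 0)
    (hcomp : psComp (uSeries c) U = PowerSeries.X) :
    ∀ m, evc c (bP m) = PowerSeries.coeff m (Vof U) := by
  intro m
  induction m using Nat.strong_induction_on with
  | _ m ih =>
    match m with
    | 0 =>
      have h1 := coeff_one_U hcomp
      have hb : bP 0 = 1 := by rw [bP]
      rw [hb, map_one, Vof, PowerSeries.coeff_mk, zero_add, h1]
    | (m+1) =>
      -- composition coefficient m+2
      have hco := congrArg (PowerSeries.coeff (m+2)) hcomp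
      rw [coeff_psComp] at hco
      rw [show m + 2 + 1 = (m+2)+1 from rfl, Finset.sum_range_succ',
        show m + 2 = (m+1)+1 from rfl, Finset.sum_range_succ'] at hco
      have hX : PowerSeries.coeff (m+1+1) (PowerSeries.X : PowerSeries ℂ) = 0 := by
        simp [PowerSeries.coeff_X]
      rw [hX] at hco
      have h0 : PowerSeries.coeff 0 (uSeries c) * PowerSeries.coeff (m+1+1) (U ^ 0) = 0 := by
        simp [coeff_uSeries]
      have h1 : PowerSeries.coeff (0+1) (uSeries c) * PowerSeries.coeff (m+1+1) (U ^ (0+1)) =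
          PowerSeries.coeff (m+1) (Vof U) := by
        simp [coeff_uSeries, Vof]
      rw [h0, add_zero, h1] at hco
      have hterm : ∀ j ∈ Finset.range (m+1),
          PowerSeries.coeff (j+1+1) (uSeries c) * PowerSeries.coeff (m+1+1) (U ^ (j+1+1)) =
          c (j+1) * PowerSeries.coeff (m-j) ((Vof U) ^ (j+2)) := by
        intro j hj
        rw [Finset.mem_range] at hj
        have hju : PowerSeries.coeff (j+1+1) (uSeries c) = c (j+1) := by
          rw [coeff_uSeries]
          norm_num
        have hcu : PowerSeries.coeff (m+1+1) (U ^ (j+1+1)) =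
            PowerSeries.coeff (m-j) ((Vof U) ^ (j+2)) := by
          exact coeff_U_pow hU0 m j (by omega)
        rw [hju, hcu]
      rw [Finset.sum_congr rfl hterm] at hco
      -- hco : ∑ + coeff (m+1) Vof = 0
      have hrec : PowerSeries.coeff (m+1) (Vof U)
          = -∑ j ∈ Finset.range (m+1), c (j+1) *
              PowerSeries.coeff (m-j) ((Vof U) ^ (j+2)) := by
        linear_combination hco
      -- now the evc side
      rw [bP_succ, map_neg, map_sum]
      rw [hrec]
      congr 1
      refine Finset.sum_congr rfl fun j hj => ?_
      rw [Finset.mem_range] at hj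
      rw [map_mul]
      have hXj : evc c (MvPolynomial.X j) = c (j+1) := by
        rw [evc, MvPolynomial.aeval_X]
      rw [hXj]
      congr 1
      -- evc of coefficient
      have h1 : evc c (PowerSeries.coeff (m-j) ((Vlt (m+1)) ^ (j+2)))
          = PowerSeries.coeff (m-j) ((PowerSeries.map (evc c).toRingHom (Vlt (m+1))) ^ (j+2)) := by
        rw [← map_pow, PowerSeries.coeff_map]
        rfl
      rw [h1, map_Vlt]
      refine coeff_pow_congr (N := m - j) ?_ (j+2) (m-j) le_rfl
      intro l hl
      rw [PowerSeries.coeff_mk, if_pos (by omega : l < m+1), ih l (by omega)]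

lemma map_Vu (hU0 : PowerSeries.constantCoeff U = 0)
    (hcomp : psComp (uSeries c) U = PowerSeries.X) :
    PowerSeries.map (evc c).toRingHom Vu = Vof U := by
  ext m
  rw [PowerSeries.coeff_map, coeff_Vu]
  exact evc_bP hU0 hcomp m

lemma derivativeFun_X' : PowerSeries.derivativeFun (PowerSeries.X : PowerSeries ℂ) = 1 := by
  ext n
  rw [coeff_derivativeFun', PowerSeries.coeff_X, PowerSeries.coeff_one]
  cases n <;> simp

lemma map_Du (hU0 : PowerSeries.constantCoeff U = 0)
    (hcomp : psComp (uSeries c) U = PowerSeries.X) :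
    PowerSeries.map (evc c).toRingHom Du = PowerSeries.derivativeFun (Vof U) := by
  ext k
  rw [PowerSeries.coeff_map, coeff_Du, coeff_derivativeFun']
  rw [map_mul, map_natCast]
  have h2 : (evc c).toRingHom (bP (k+1)) = PowerSeries.coeff (k+1) (Vof U) :=
    evc_bP hU0 hcomp (k+1)
  rw [h2]
  push_cast
  ring

lemma Wc_mul_V (hU0 : PowerSeries.constantCoeff U = 0)
    (hcomp : psComp (uSeries c) U = PowerSeries.X) :
    (PowerSeries.map (evc c).toRingHom Wu) * Vof U = PowerSeries.derivativeFun (Vof U) := by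
  calc (PowerSeries.map (evc c).toRingHom Wu) * Vof U
      = (PowerSeries.map (evc c).toRingHom Wu) * (PowerSeries.map (evc c).toRingHom Vu) := by
        rw [map_Vu hU0 hcomp]
    _ = PowerSeries.map (evc c).toRingHom (Wu * Vu) := by rw [map_mul]
    _ = PowerSeries.map (evc c).toRingHom Du := by rw [Wu_mul_Vu]
    _ = PowerSeries.derivativeFun (Vof U) := map_Du hU0 hcomp

lemma constantCoeff_Vof (hcomp : psComp (uSeries c) U = PowerSeries.X) :
    PowerSeries.constantCoeff (Vof U) = 1 := by
  rw [← PowerSeries.coeff_zero_eq_constantCoeff_apply, Vof, PowerSeries.coeff_mk, zero_add]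
  exact coeff_one_U hcomp

lemma tLS_single : tLS = HahnSeries.single (1 : ℤ) (1 : ℂ) := by
  rw [tLS, toLS, HahnSeries.ofPowerSeries_X]

lemma tLS_pow (m : ℕ) : tLS ^ m = HahnSeries.single ((m : ℤ)) (1 : ℂ) := by
  rw [tLS_single, HahnSeries.single_pow]
  simp

lemma tLS_zpow : ∀ k : ℤ, tLS ^ k = HahnSeries.single k (1 : ℂ) := by
  intro k
  cases k with
  | ofNat m => simpa using tLS_pow m
  | negSucc m =>
    rw [zpow_negSucc, tLS_pow (m+1)]
    have hmul : HahnSeries.single (Int.negSucc m) (1:ℂ)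
        * HahnSeries.single (((m+1 : ℕ)) : ℤ) (1:ℂ) = 1 := by
      rw [HahnSeries.single_mul_single, one_mul,
        show Int.negSucc m + ((m+1 : ℕ) : ℤ) = 0 from by rw [Int.negSucc_eq]; push_cast; ring,
        HahnSeries.single_zero_one]
    exact (inv_eq_of_mul_eq_one_left hmul)

lemma toLS_coeff_neg (f : PowerSeries ℂ) {d : ℤ} (hd : d < 0) : (toLS f).coeff d = 0 := by
  rw [toLS, HahnSeries.ofPowerSeries_apply]
  apply HahnSeries.embDomain_notin_range
  rintro ⟨l, hl⟩
  have hl' : ((l : ℤ)) = d := hl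
  omega

lemma toLS_coeff (f : PowerSeries ℂ) (l : ℕ) :
    (toLS f).coeff (l : ℤ) = PowerSeries.coeff l f := by
  rw [toLS]
  exact HahnSeries.ofPowerSeries_apply_coeff f l

lemma Pres_coeffs (hU0 : PowerSeries.constantCoeff U = 0)
    (hcomp : psComp (uSeries c) U = PowerSeries.X) {n : ℕ} (hn : 1 ≤ n) :
    Pres n U = 2 * PowerSeries.coeff (n-1) (PowerSeries.map (evc c).toRingHom Wu) +
      (if 2 ≤ n then ∑ p ∈ Finset.HasAntidiagonal.antidiagonal (n-2),
        PowerSeries.coeff p.1 (PowerSeries.map (evc c).toRingHom Wu) *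
        PowerSeries.coeff p.2 (PowerSeries.map (evc c).toRingHom Wu) else 0) := by
  classical
  set Wc := PowerSeries.map (evc c).toRingHom Wu with hWc
  set V := Vof U with hV
  have hV0 : PowerSeries.constantCoeff V = 1 := constantCoeff_Vof hcomp
  have hVne : V ≠ 0 := fun h => by rw [h] at hV0; simp at hV0
  have hVlsne : toLS V ≠ 0 := fun h => hVne (HahnSeries.ofPowerSeries_injective (by
    rw [toLS] at h; rw [h]; simp))
  have htne : tLS ≠ 0 := by
    rw [tLS_single]
    exact HahnSeries.single_ne_zero one_ne_zero
  have hUls : toLS U = tLS * toLS V := by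
    conv_lhs => rw [← X_mul_Vof hU0]
    rw [toLS, map_mul]
    rfl
  have hUlsne : toLS U ≠ 0 := by
    rw [hUls]
    exact mul_ne_zero htne hVlsne
  have hU' : PowerSeries.derivativeFun U = V + PowerSeries.X * PowerSeries.derivativeFun V := by
    conv_lhs => rw [← X_mul_Vof hU0]
    rw [PowerSeries.derivativeFun_mul, derivativeFun_X']
    simp only [smul_eq_mul]
    ring
  have hWV : toLS Wc * toLS V = toLS (PowerSeries.derivativeFun V) := by
    simp only [toLS]
    rw [← map_mul]
    congr 1
    exact Wc_mul_V hU0 hcomp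
  have hdiv : toLS (PowerSeries.derivativeFun U) / toLS U = tLS⁻¹ + toLS Wc := by
    rw [div_eq_iff hUlsne, hUls, hU']
    have hexp : (tLS⁻¹ + toLS Wc) * (tLS * toLS V)
        = toLS V + tLS * (toLS Wc * toLS V) := by
      field_simp
    rw [hexp, hWV]
    rw [toLS, map_add, map_mul]
    rfl
  rw [Pres, hdiv]
  have hinv : tLS⁻¹ = HahnSeries.single (-1 : ℤ) (1:ℂ) := by
    rw [← zpow_neg_one, tLS_zpow]
  rw [tLS_zpow (1 - (n:ℤ)), hinv, add_sq, two_mul, add_mul, add_mul, add_mul, add_mul]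
  rw [HahnSeries.coeff_add, HahnSeries.coeff_add, HahnSeries.coeff_add]
  set w := toLS Wc with hw
  have hT1 : ((HahnSeries.single (-1:ℤ) (1:ℂ)) ^ 2
      * HahnSeries.single (1 - (n:ℤ)) 1).coeff (-1) = 0 := by
    rw [sq, HahnSeries.single_mul_single, HahnSeries.single_mul_single]
    apply HahnSeries.coeff_single_of_ne
    omega
  have hT2 : ((HahnSeries.single (-1:ℤ) (1:ℂ)) * w
      * HahnSeries.single (1 - (n:ℤ)) 1).coeff (-1)
      = PowerSeries.coeff (n-1) Wc := by
    rw [mul_right_comm, HahnSeries.single_mul_single, one_mul,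
      show (-1 + (1 - (n:ℤ))) = -(n:ℤ) from by ring]
    have hidx : (-1 : ℤ) = ((n : ℤ) - 1) + (-(n:ℤ)) := by ring
    rw [hidx, HahnSeries.coeff_single_mul_add, one_mul]
    rw [show ((n:ℤ) - 1) = (((n-1 : ℕ)) : ℤ) from by omega]
    exact toLS_coeff Wc (n-1)
  have hT3 : (w ^ 2 * HahnSeries.single (1 - (n:ℤ)) 1).coeff (-1)
      = (if 2 ≤ n then ∑ p ∈ Finset.HasAntidiagonal.antidiagonal (n-2),
          PowerSeries.coeff p.1 Wc * PowerSeries.coeff p.2 Wc else 0) := by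
    rw [mul_comm (w ^ 2)]
    have hidx : (-1 : ℤ) = ((n : ℤ) - 2) + (1 - (n:ℤ)) := by ring
    rw [hidx, HahnSeries.coeff_single_mul_add, one_mul]
    have hww : w ^ 2 = toLS (Wc * Wc) := by
      rw [sq]
      simp only [hw, toLS]
      exact (map_mul _ _ _).symm
    rw [hww]
    by_cases h2 : 2 ≤ n
    · rw [if_pos h2]
      rw [show ((n:ℤ) - 2) = (((n-2 : ℕ)) : ℤ) from by omega, toLS_coeff,
        PowerSeries.coeff_mul]
    · rw [if_neg h2]
      exact toLS_coeff_neg _ (by omega)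
  rw [hT1, hT2, hT3]
  ring

lemma coeff_map_Wu (c : ℕ → ℂ) (k : ℕ) :
    PowerSeries.coeff k (PowerSeries.map (evc c).toRingHom Wu) = evc c (wP k) := by
  rw [PowerSeries.coeff_map]
  rfl

lemma Pres_eval (hU0 : PowerSeries.constantCoeff U = 0)
    (hcomp : psComp (uSeries c) U = PowerSeries.X) {n : ℕ} (hn : 1 ≤ n) :
    Pres n U = evc c (PuP n) := by
  rw [Pres_coeffs hU0 hcomp hn, PuP]
  simp only [coeff_map_Wu, map_add, map_mul, map_ofNat, apply_ite (evc c), map_sum, map_zero]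

lemma c_eq (hU0 : PowerSeries.constantCoeff U = 0)
    (hcomp : psComp (uSeries c) U = PowerSeries.X) {n : ℕ} (hn : 1 ≤ n) :
    Pres n U = -(2 * (n:ℂ)) * c n + evc c (EuP n) := by
  rw [Pres_eval hU0 hcomp hn, PuP_eq n, map_add, map_neg, map_mul, map_natCast]
  have hX : evc c (MvPolynomial.X (n-1)) = c n := by
    rw [evc, MvPolynomial.aeval_X, show n - 1 + 1 = n from by omega]
  rw [hX]
  push_cast
  ring

lemma c_QpP (hU0 : PowerSeries.constantCoeff U = 0)
    (hcomp : psComp (uSeries c) U = PowerSeries.X) :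
    ∀ n, 1 ≤ n →
      c n = MvPolynomial.aeval (fun i => Pres (i+1) U) (QpP n) := by
  intro n
  induction n using Nat.strong_induction_on with
  | _ n ih =>
    intro hn
    obtain ⟨m, rfl⟩ : ∃ m, n = m+1 := ⟨n-1, by omega⟩
    rw [QpP, map_smul, map_sub, MvPolynomial.aeval_X]
    have hcompose : MvPolynomial.aeval (fun i => Pres (i+1) U)
        (MvPolynomial.aeval (fun i => if h : i < m then QpP (i+1) else 0) (EuP (m+1)))
        = evc c (EuP (m+1)) := by
      have hc := MvPolynomial.comp_aeval
        (f := fun i => if h : i < m then QpP (i+1) else 0)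
        (φ := MvPolynomial.aeval (fun i => Pres (i+1) U))
      have hc' := DFunLike.congr_fun hc (EuP (m+1))
      simp only [AlgHom.coe_comp, Function.comp_apply] at hc'
      rw [hc']
      rw [evc]
      apply aeval_congr_on_vars
      intro i hi
      have him : i < m := Finset.mem_range.1 ((EuP_vars (by omega)) hi)
      rw [dif_pos him]
      exact (ih (i+1) (by omega) (by omega)).symm
    rw [hcompose]
    have hP := c_eq hU0 hcomp (n := m+1) (by omega)
    rw [hP]
    have hm1 : ((m:ℂ) + 1) ≠ 0 := Nat.cast_add_one_ne_zero m
    rw [Rat.smul_def]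
    push_cast
    field_simp
    ring

end Instance

def rho (n : ℕ) : Rr →ₐ[ℚ] MvPolynomial (Fin n) ℚ :=
  MvPolynomial.aeval (fun i => if h : i < n then MvPolynomial.X (⟨i, h⟩ : Fin n) else 0)

lemma rho_aeval (n : ℕ) (P : Fin n → ℂ) (p : Rr) (hp : p.vars ⊆ Finset.range n) :
    MvPolynomial.aeval P (rho n p)
      = MvPolynomial.aeval (fun i : ℕ => if h : i < n then P ⟨i, h⟩ else 0) p := by
  have hc := MvPolynomial.comp_aeval
    (f := fun i : ℕ => if h : i < n then (MvPolynomial.X (⟨i, h⟩ : Fin n) :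
      MvPolynomial (Fin n) ℚ) else 0)
    (φ := MvPolynomial.aeval P)
  have hc' := DFunLike.congr_fun hc p
  simp only [AlgHom.coe_comp, Function.comp_apply] at hc'
  rw [rho, hc']
  apply aeval_congr_on_vars
  intro i hi
  have him : i < n := Finset.mem_range.1 (hp hi)
  rw [dif_pos him, dif_pos him, MvPolynomial.aeval_X]

end Prop34

open Prop34

/-- **(Proposition 3.4(c,d).)**  `u_n` is a polynomial with rational coefficients in
`P_1, …, P_n` (variable `j : Fin n` standing for `P_{j+1}`), weighted homogeneous of
degree `n` when `P_j` has degree `j`, of the form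
`u_n = -(1/(2n))·P_n + (terms involving only P_1, …, P_{n-1})`.
Consequently `ℚ[P_1,…,P_n] = ℚ[u_1,…,u_n]` (as subalgebras of `ℂ`, for each `u`). -/
theorem un_is_rational_polynomial_in_Pn (n : ℕ) (hn : 1 ≤ n) :
    (∃ Q : MvPolynomial (Fin n) ℚ,
      Q.IsWeightedHomogeneous (fun j : Fin n => (j : ℕ) + 1) n ∧
      (∃ Q' : MvPolynomial (Fin n) ℚ,
        (⟨n - 1, Nat.sub_lt hn one_pos⟩ : Fin n) ∉ Q'.vars ∧
        Q = (-(1 / (2 * (n : ℚ)))) • MvPolynomial.X ⟨n - 1, Nat.sub_lt hn one_pos⟩ + Q') ∧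
      ∀ (c : ℕ → ℂ) (U : PowerSeries ℂ),
        PowerSeries.constantCoeff U = 0 →
        psComp (uSeries c) U = PowerSeries.X →
        c n = MvPolynomial.aeval (fun j : Fin n => Pres ((j : ℕ) + 1) U) Q) ∧
    ∀ (c : ℕ → ℂ) (U : PowerSeries ℂ),
      PowerSeries.constantCoeff U = 0 →
      psComp (uSeries c) U = PowerSeries.X →
      Algebra.adjoin ℚ (Set.range fun j : Fin n => Pres ((j : ℕ) + 1) U) =
        Algebra.adjoin ℚ (Set.range fun j : Fin n => c ((j : ℕ) + 1)) := by
  constructor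
  · obtain ⟨m, rfl⟩ : ∃ m, n = m + 1 := ⟨n - 1, by omega⟩
    refine ⟨rho (m+1) (QpP (m+1)), ?_, ⟨rho (m+1) (QpP (m+1) +
      (1 / (2 * ((m : ℚ) + 1))) • MvPolynomial.X m), ?_, ?_⟩, ?_⟩
    · -- homogeneity
      refine aeval_IsWH (w := wt) _ ?_ (QpP_hom (m+1))
      intro i
      split
      · next h =>
        simpa [wt] using MvPolynomial.isWeightedHomogeneous_X ℚ (fun j : Fin (m+1) => (j : ℕ) + 1) ⟨i, h⟩
      · exact MvPolynomial.isWeightedHomogeneous_zero ℚ _ _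
    · -- the distinguished variable does not occur in Q'
      intro hmem
      have hsub := vars_aeval_subset
        (fun i : ℕ => if h : i < m+1 then (MvPolynomial.X (⟨i, h⟩ : Fin (m+1)) :
          MvPolynomial (Fin (m+1)) ℚ) else 0)
        (QpP (m+1) + (1 / (2 * ((m : ℚ) + 1))) • MvPolynomial.X m)
      have := hsub hmem
      simp only [Finset.mem_biUnion] at this
      obtain ⟨i, hi, hmemi⟩ := this
      have him : i < m := Finset.mem_range.1 (QpP_rem_vars m hi)
      rw [dif_pos (by omega : i < m+1), MvPolynomial.vars_X] at hmemi
      simp only [Finset.mem_singleton, Fin.mk.injEq] at hmemi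
      omega
    · -- decomposition
      rw [map_add, map_smul]
      have hX : rho (m+1) (MvPolynomial.X m) = MvPolynomial.X ⟨m, by omega⟩ := by
        rw [rho, MvPolynomial.aeval_X, dif_pos (by omega : m < m+1)]
      rw [hX]
      have hsc : (-(1 / (2 * ((m+1 : ℕ) : ℚ)))) = -(1 / (2 * ((m:ℚ)+1))) := by push_cast; ring
      rw [hsc, neg_smul]
      abel_nf
      simp
    · -- value identity
      intro c U hU0 hcomp
      rw [rho_aeval (m+1) _ _ (QpP_vars (m+1))]
      rw [c_QpP hU0 hcomp (m+1) (by omega)]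
      apply aeval_congr_on_vars
      intro i hi
      have him : i < m+1 := Finset.mem_range.1 (QpP_vars (m+1) hi)
      rw [dif_pos him]
  · -- adjoin equality
    intro c U hU0 hcomp
    apply le_antisymm
    · apply Algebra.adjoin_le
      rintro x ⟨j, rfl⟩
      show Pres ((j:ℕ)+1) U ∈ _
      simp only [SetLike.mem_coe]
      have hval := Pres_eval hU0 hcomp (n := (j:ℕ)+1) (by omega)
      rw [hval, evc]
      apply aeval_mem_subalgebra
      intro i hi
      have him : i < (j:ℕ)+1 := Finset.mem_range.1 (PuP_vars (by omega) hi)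
      have hin : i < n := by omega
      exact Algebra.subset_adjoin ⟨⟨i, hin⟩, rfl⟩
    · apply Algebra.adjoin_le
      rintro x ⟨j, rfl⟩
      show c ((j:ℕ)+1) ∈ _
      simp only [SetLike.mem_coe]
      rw [c_QpP hU0 hcomp ((j:ℕ)+1) (by omega)]
      apply aeval_mem_subalgebra
      intro i hi
      have him : i < (j:ℕ)+1 := Finset.mem_range.1 (QpP_vars ((j:ℕ)+1) hi)
      have hin : i < n := by omega
      exact Algebra.subset_adjoin ⟨⟨i, hin⟩, rfl⟩

end
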